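/- Let Λ = (L, 𝔐, ⊨) be a reception-compatible satisfaction system (FRsups(Mod(B) ∪ M, Λ) ≠ ∅ for all finite B and all M). If a model change operation ⊕ satisfies success (M ⊆ Mod(⊕(B,M))), persistence (Mod(B) ⊆ Mod(⊕(B,M))), and finite temperance (if Mod(B) ∪ M ⊆ M' ⊊ Mod(⊕(B,M)) then M' ∉ FRsets(Λ)), then Mod(⊕(B,M)) ∈ FRsups(Mod(B) ∪ M, Λ) for all finite B ⊆ L and M ⊆ 𝔐. -/
import Mathlib

variable {α β : Type*}

def ModelsOf (sat : β → Set α → Prop) (B : Set α) : Set β := {m | sat m B}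

def FRsets (sat : β → Set α → Prop) : Set (Set β) :=
  {X | ∃ B : Set α, B.Finite ∧ ModelsOf sat B = X}

def FRsubs (sat : β → Set α → Prop) (M : Set β) : Set (Set β) :=
  {X | X ∈ FRsets sat ∧ X ⊆ M ∧ ¬ ∃ Y ∈ FRsets sat, X ⊂ Y ∧ Y ⊆ M}

def FRsups (sat : β → Set α → Prop) (M : Set β) : Set (Set β) :=
  {X | X ∈ FRsets sat ∧ M ⊆ X ∧ ¬ ∃ Y ∈ FRsets sat, M ⊆ Y ∧ Y ⊂ X}

theorem stmt11 (sat : β → Set α → Prop) (f : Set α → Set β → Set α)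
    (hcompat : ∀ (B : Set α) (M : Set β), B.Finite →
      (FRsups sat (ModelsOf sat B ∪ M)).Nonempty)
    (hfin : ∀ B M, (f B M).Finite)
    (hsucc : ∀ (B : Set α) (M : Set β), B.Finite →
      M ⊆ ModelsOf sat (f B M))
    (hpers : ∀ (B : Set α) (M : Set β), B.Finite →
      ModelsOf sat B ⊆ ModelsOf sat (f B M))
    (htemp : ∀ (B : Set α) (M : Set β), B.Finite → ∀ M' : Set β,
      ModelsOf sat B ∪ M ⊆ M' → M' ⊂ ModelsOf sat (f B M) → M' ∉ FRsets sat) :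
    ∀ (B : Set α) (M : Set β), B.Finite →
      ModelsOf sat (f B M) ∈ FRsups sat (ModelsOf sat B ∪ M) := by
  intro B M hB
  refine ⟨⟨f B M, hfin B M, rfl⟩, Set.union_subset (hpers B M hB) (hsucc B M hB), ?_⟩
  rintro ⟨Y, hYfr, hsub, hlt⟩
  exact htemp B M hB Y hsub hlt hYfr
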